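/- Let q be a prime power, let n ≥ 2, and let B be a nondegenerate alternating bilinear form on 𝔽_q^{2n+2}, defining the symplectic polar space W(2n+1,q). Let 𝒪 be an m-ovoid of W(2n+1,q) with m ≥ 1 and (n,m) ≠ (2, q²+1). Let W be a 2n-dimensional vector subspace of 𝔽_q^{2n+2} on which B restricts to a nondegenerate alternating form. If every projective point of W belongs to 𝒪, then 𝒪 consists of all projective points of PG(2n+1,q). -/

import Mathlib

set_option linter.unusedSectionVars false


open Module Set

/-- The projective points of `PG(V)`: one-dimensional subspaces of `V`. -/
def ProjPoints (F V : Type) [Field F] [AddCommGroup V] [Module F V] :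
    Set (Submodule F V) :=
  {p | ∃ v : V, v ≠ 0 ∧ p = Submodule.span F {v}}

/-- A subspace `W` is totally isotropic for the bilinear form `B`. -/
def TotallyIsotropic {F V : Type} [Field F] [AddCommGroup V] [Module F V]
    (B : LinearMap.BilinForm F V) (W : Submodule F V) : Prop :=
  ∀ v ∈ W, ∀ w ∈ W, B v w = 0

/-- A generator of the symplectic polar space defined by `B`: a totally isotropic
subspace of maximal vector dimension. -/
def IsSympGenerator {F V : Type} [Field F] [AddCommGroup V] [Module F V]
    (B : LinearMap.BilinForm F V) (G : Submodule F V) : Prop :=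
  TotallyIsotropic B G ∧
    ∀ G' : Submodule F V, TotallyIsotropic B G' →
      Module.finrank F G' ≤ Module.finrank F G

/-- An `m`-ovoid of the symplectic polar space defined by `B`: a set of projective
points such that every generator contains exactly `m` of them. -/
def IsSympMOvoid {F V : Type} [Field F] [AddCommGroup V] [Module F V]
    (B : LinearMap.BilinForm F V) (m : ℕ) (O : Set (Submodule F V)) : Prop :=
  O ⊆ ProjPoints F V ∧
    ∀ G : Submodule F V, IsSympGenerator B G → (O ∩ {p | p ≤ G}).ncard = m

namespace MOVAux


/-- geometric sum -/
def th (q d : ℕ) : ℕ := ∑ i ∈ Finset.range d, q ^ i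

lemma th_succ (q d : ℕ) : th q (d+1) = th q d + q ^ d := Finset.sum_range_succ _ _

lemma th_mul {q : ℕ} (hq : 1 ≤ q) (d : ℕ) : th q d * (q - 1) + 1 = q ^ d := by
  induction d with
  | zero => simp [th]
  | succ d ih =>
    rw [th_succ, add_mul, pow_succ]
    have h1 : q ^ d * (q - 1) + q ^ d * 1 = q ^ d * q := by
      rw [← Nat.mul_add]
      congr 1
      omega
    omega

lemma th_pos {q : ℕ} (hq : 1 ≤ q) {d : ℕ} (hd : 0 < d) : 0 < th q d := by
  obtain ⟨e, rfl⟩ : ∃ e, d = e + 1 := ⟨d - 1, by omega⟩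
  rw [th_succ]
  have : 1 ≤ q ^ e := Nat.one_le_pow _ _ hq
  omega

lemma th_two_mul {q : ℕ} (hq : 2 ≤ q) (d : ℕ) : th q (2*d) = th q d * (q ^ d + 1) := by
  have h1 := th_mul (show 1 ≤ q by omega) (2*d)
  have h2 := th_mul (show 1 ≤ q by omega) d
  set X := th q d * (q - 1) with hX
  have e1 : th q d * (q ^ d + 1) * (q - 1) = X * q ^ d + X := by rw [hX]; ring
  have e2 : q ^ (2*d) = X * q ^ d + q ^ d := by
    rw [two_mul, pow_add, ← h2]; ring
  have key : th q d * (q ^ d + 1) * (q - 1) + 1 = q ^ (2*d) := by omega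
  have h3 : th q (2*d) * (q-1) + 1 = th q d * (q ^ d + 1) * (q-1) + 1 := by rw [h1, key]
  exact Nat.eq_of_mul_eq_mul_right (show 0 < q - 1 by omega) (by omega)

def gprod (q j : ℕ) : ℕ := ∏ i ∈ Finset.range j, (q ^ (i+1) + 1)

lemma gprod_succ (q j : ℕ) : gprod q (j+1) = gprod q j * (q ^ (j+1) + 1) :=
  Finset.prod_range_succ _ _

lemma gprod_pos (q j : ℕ) : 0 < gprod q j :=
  Finset.prod_pos fun i _ => by positivity

lemma sep_ncard {β : Type} {S : Set β} (hS : S.Finite) (p : β → Prop) [DecidablePred p] :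
    {b ∈ S | p b}.ncard = (hS.toFinset.filter p).card := by
  rw [← Set.ncard_coe_finset]
  congr 1
  ext b
  simp

/-- generic fiber counting -/
lemma fiber_count {α β : Type} {S : Set α} (hS : S.Finite) (f : α → β) (r : ℕ)
    (h : ∀ b ∈ f '' S, {a ∈ S | f a = b}.ncard = r) :
    (f '' S).ncard * r = S.ncard := by
  classical
  have himg : (f '' S).ncard = (hS.toFinset.image f).card := by
    rw [← Set.ncard_coe_finset]; congr 1; simp
  have hfib : ∀ b ∈ hS.toFinset.image f, (hS.toFinset.filter (fun a => f a = b)).card = r := by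
    intro b hb
    rw [← sep_ncard hS (fun x => f x = b)]
    exact h b (by simpa using hb)
  rw [himg, Set.ncard_eq_toFinset_card _ hS, Finset.card_eq_sum_card_image f hS.toFinset,
    Finset.sum_congr rfl hfib, Finset.sum_const, smul_eq_mul, mul_comm]

/-- generic double counting -/
lemma dc {α β : Type} {A : Set α} {Bs : Set β} (hA : A.Finite) (hB : Bs.Finite)
    (R : α → β → Prop) (f : α → ℕ) (g : β → ℕ)
    (hrow : ∀ a ∈ A, {b ∈ Bs | R a b}.ncard = f a)
    (hcol : ∀ b ∈ Bs, {a ∈ A | R a b}.ncard = g b) :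
    ∑ a ∈ hA.toFinset, f a = ∑ b ∈ hB.toFinset, g b := by
  classical
  have L : ∀ a ∈ hA.toFinset, f a = (hB.toFinset.filter (R a ·)).card := by
    intro a ha
    rw [← hrow a (hA.mem_toFinset.mp ha), sep_ncard hB]
  have Rr : ∀ b ∈ hB.toFinset, g b = (hA.toFinset.filter (R · b)).card := by
    intro b hb
    rw [← hcol b (hB.mem_toFinset.mp hb), sep_ncard hA]
  rw [Finset.sum_congr rfl L, Finset.sum_congr rfl Rr]
  simp_rw [Finset.card_filter]
  rw [Finset.sum_comm]

lemma dc_const {α β : Type} {A : Set α} {Bs : Set β} (hA : A.Finite) (hB : Bs.Finite)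
    (R : α → β → Prop) (r c : ℕ)
    (hrow : ∀ a ∈ A, {b ∈ Bs | R a b}.ncard = r)
    (hcol : ∀ b ∈ Bs, {a ∈ A | R a b}.ncard = c) :
    A.ncard * r = Bs.ncard * c := by
  have h := dc hA hB R (fun _ => r) (fun _ => c) hrow hcol
  rw [Finset.sum_const, Finset.sum_const, smul_eq_mul, smul_eq_mul] at h
  rw [Set.ncard_eq_toFinset_card _ hA, Set.ncard_eq_toFinset_card _ hB]
  omega



section LinAlg

variable {F V : Type} [Field F] [Fintype F] [AddCommGroup V] [Module F V]
  [FiniteDimensional F V] [Fintype V]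

instance : Finite (Submodule F V) :=
  Finite.of_injective (fun U => (U : Set V)) SetLike.coe_injective

lemma ncard_coe_submodule (U : Submodule F V) :
    (U : Set V).ncard = Fintype.card F ^ finrank F U := by
  classical
  haveI : Fintype U := Fintype.ofFinite _
  rw [← Nat.card_coe_set_eq]
  have h1 : Nat.card (U : Set V) = Nat.card U := rfl
  rw [h1, Nat.card_eq_fintype_card]
  exact card_eq_pow_finrank (K := F)

lemma ncard_diff_submodule {U U' : Submodule F V} (h : U ≤ U') :
    ((U' : Set V) \ (U : Set V)).ncard + Fintype.card F ^ finrank F U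
      = Fintype.card F ^ finrank F U' := by
  rw [← ncard_coe_submodule U, ← ncard_coe_submodule U']
  exact Set.ncard_diff_add_ncard_of_subset h (Set.toFinite _)

lemma finrank_sup_span_singleton {U : Submodule F V} {v : V} (hv : v ∉ U) :
    finrank F ↥(U ⊔ Submodule.span F {v}) = finrank F U + 1 := by
  have hv0 : v ≠ 0 := by rintro rfl; exact hv U.zero_mem
  have hd : U ⊓ Submodule.span F {v} = ⊥ := by
    rw [eq_bot_iff]
    rintro x ⟨hxU, hxs⟩
    obtain ⟨c, rfl⟩ := Submodule.mem_span_singleton.mp hxs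
    rcases eq_or_ne c 0 with rfl | hc
    · simp
    · exact absurd ((Submodule.smul_mem_iff _ hc).mp hxU) hv
  have := Submodule.finrank_sup_add_finrank_inf_eq U (Submodule.span F {v})
  rw [hd, finrank_bot, add_zero, finrank_span_singleton
    hv0] at this
  omega

/-- the projective points inside a subspace -/
lemma pts_eq_image (U : Submodule F V) :
    ProjPoints F V ∩ {p | p ≤ U} = (fun v => Submodule.span F {v}) '' ((U : Set V) \ {0}) := by
  ext p
  constructor
  · rintro ⟨⟨v, hv0, rfl⟩, hle⟩
    exact ⟨v, ⟨hle (Submodule.mem_span_singleton_self v), hv0⟩, rfl⟩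
  · rintro ⟨v, ⟨hvU, hv0⟩, rfl⟩
    refine ⟨⟨v, by simpa using hv0, rfl⟩, ?_⟩
    exact (Submodule.span_singleton_le_iff_mem v U).mpr hvU

lemma ncard_pts (hq : 2 ≤ Fintype.card F) (U : Submodule F V) :
    (ProjPoints F V ∩ {p | p ≤ U}).ncard = th (Fintype.card F) (finrank F U) := by
  classical
  set q := Fintype.card F
  rw [pts_eq_image]
  have hfc := fiber_count (S := (U : Set V) \ {0}) (Set.toFinite _)
    (fun v => Submodule.span F {v}) (q - 1) ?_
  · have hS : ((U : Set V) \ {0}).ncard + 1 = q ^ finrank F U := by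
      have := ncard_diff_submodule (bot_le : ⊥ ≤ U)
      simpa [finrank_bot] using this
    have hth := th_mul (show 1 ≤ q by omega) (finrank F U)
    have : ((fun v => Submodule.span F {v}) '' ((U : Set V) \ {0})).ncard * (q-1)
        = th q (finrank F U) * (q - 1) := by omega
    exact Nat.eq_of_mul_eq_mul_right (by omega) this
  · rintro p ⟨v, ⟨hvU, hv0⟩, rfl⟩
    have hv0 : v ≠ 0 := by simpa using hv0
    have hfib : {a ∈ (U : Set V) \ {0} | Submodule.span F {a} = Submodule.span F {v}}
        = (Submodule.span F {v} : Set V) \ {0} := by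
      ext w
      constructor
      · rintro ⟨⟨hwU, hw0⟩, hsp⟩
        exact ⟨hsp ▸ Submodule.mem_span_singleton_self w, hw0⟩
      · rintro ⟨hwsp, hw0⟩
        have hw0' : w ≠ 0 := by simpa using hw0
        have hsub : Submodule.span F {w} ≤ Submodule.span F {v} := by
          rwa [Submodule.span_singleton_le_iff_mem]
        have hrank : finrank F (Submodule.span F {v}) ≤ finrank F (Submodule.span F {w}) := by
          rw [finrank_span_singleton hv0, finrank_span_singleton hw0']
        have := Submodule.eq_of_le_of_finrank_le hsub hrank
        refine ⟨⟨?_, hw0⟩, this⟩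
        have : w ∈ Submodule.span F {v} := hwsp
        rcases Submodule.mem_span_singleton.mp this with ⟨c, rfl⟩
        exact Submodule.smul_mem _ _ hvU
    rw [hfib]
    have h1 : ((Submodule.span F {v} : Set V) \ {0}).ncard + 1 = q ^ 1 := by
      have := ncard_diff_submodule (bot_le : ⊥ ≤ Submodule.span F {v})
      simpa [finrank_bot, finrank_span_singleton hv0] using this
    rw [pow_one] at h1
    omega

end LinAlg

section Symp

variable {F V : Type} [Field F] [Fintype F] [AddCommGroup V] [Module F V]
  [FiniteDimensional F V] [Fintype V] {B : LinearMap.BilinForm F V}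

lemma bRefl (halt : ∀ v : V, B v v = 0) : B.IsRefl :=
  LinearMap.IsAlt.isRefl halt

lemma ti_le_orthogonal {U : Submodule F V} (h : TotallyIsotropic B U) :
    U ≤ B.orthogonal U := fun x hx n hn => h n hn x hx

lemma finrank_orth (halt : ∀ v : V, B v v = 0) (hnd : B.Nondegenerate)
    (U : Submodule F V) :
    finrank F (B.orthogonal U) = finrank F V - finrank F U :=
  LinearMap.BilinForm.finrank_orthogonal hnd U

lemma ti_finrank_le (halt : ∀ v : V, B v v = 0) (hnd : B.Nondegenerate)
    {U : Submodule F V} (hU : TotallyIsotropic B U) :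
    2 * finrank F U ≤ finrank F V := by
  have h1 := Submodule.finrank_mono (ti_le_orthogonal hU)
  rw [finrank_orth halt hnd U] at h1
  have h2 : finrank F U ≤ finrank F V := Submodule.finrank_le U
  omega

lemma ti_sup_span (halt : ∀ v : V, B v v = 0) {U : Submodule F V}
    (hU : TotallyIsotropic B U) {v : V} (hv : v ∈ B.orthogonal U) :
    TotallyIsotropic B (U ⊔ Submodule.span F {v}) := by
  intro x hx y hy
  rw [Submodule.mem_sup] at hx hy
  obtain ⟨u, hu, z, hz, rfl⟩ := hx
  obtain ⟨u', hu', z', hz', rfl⟩ := hy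
  obtain ⟨a, rfl⟩ := Submodule.mem_span_singleton.mp hz
  obtain ⟨b, rfl⟩ := Submodule.mem_span_singleton.mp hz'
  have hBv : ∀ w ∈ U, B w v = 0 := fun w hw => hv w hw
  have hvw : ∀ w ∈ U, B v w = 0 := fun w hw => bRefl halt w v (hBv w hw)
  simp only [map_add, map_smul, LinearMap.add_apply, LinearMap.smul_apply, smul_eq_mul]
  rw [hU u hu u' hu', hBv u hu, hvw u' hu', halt v]
  ring

lemma ti_bot : TotallyIsotropic B (⊥ : Submodule F V) := by
  intro v hv w hw
  simp only [Submodule.mem_bot] at hv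
  simp [hv]

lemma exists_ti_ext (halt : ∀ v : V, B v v = 0) (hnd : B.Nondegenerate) {k : ℕ}
    (hdim : finrank F V = 2 * k) :
    ∀ d (U : Submodule F V), TotallyIsotropic B U → finrank F U + d = k →
      ∃ G, U ≤ G ∧ TotallyIsotropic B G ∧ finrank F G = k := by
  intro d
  induction d with
  | zero => exact fun U hU h => ⟨U, le_rfl, hU, by omega⟩
  | succ d ih =>
    intro U hU h
    have horth : finrank F (B.orthogonal U) = 2 * k - finrank F U :=
      hdim ▸ finrank_orth halt hnd U
    have hnle : ¬ (B.orthogonal U ≤ U) := by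
      intro hle
      have := Submodule.finrank_mono hle
      omega
    obtain ⟨v, hvO, hvU⟩ := SetLike.not_le_iff_exists.mp hnle
    obtain ⟨G, hle, hG, hGk⟩ := ih (U ⊔ Submodule.span F {v}) (ti_sup_span halt hU hvO)
      (by rw [finrank_sup_span_singleton hvU]; omega)
    exact ⟨G, le_trans le_sup_left hle, hG, hGk⟩

lemma gen_iff (halt : ∀ v : V, B v v = 0) (hnd : B.Nondegenerate) {k : ℕ}
    (hdim : finrank F V = 2 * k) {G : Submodule F V} :
    IsSympGenerator B G ↔ TotallyIsotropic B G ∧ finrank F G = k := by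
  constructor
  · rintro ⟨hti, hmax⟩
    refine ⟨hti, le_antisymm ?_ ?_⟩
    · have := ti_finrank_le halt hnd hti; omega
    · obtain ⟨G₀, -, hG₀, hG₀k⟩ := exists_ti_ext halt hnd hdim k ⊥ ti_bot
        (by simp)
      have := hmax G₀ hG₀
      omega
  · rintro ⟨hti, hrk⟩
    refine ⟨hti, fun G' hG' => ?_⟩
    have := ti_finrank_le halt hnd hG'
    omega

lemma exists_gen_above (halt : ∀ v : V, B v v = 0) (hnd : B.Nondegenerate) {k : ℕ}
    (hdim : finrank F V = 2 * k) {U : Submodule F V} (hU : TotallyIsotropic B U) :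
    ∃ G, U ≤ G ∧ IsSympGenerator B G := by
  have hle : finrank F U ≤ k := by have := ti_finrank_le halt hnd hU; omega
  obtain ⟨G, h1, h2, h3⟩ := exists_ti_ext halt hnd hdim (k - finrank F U) U hU (by omega)
  exact ⟨G, h1, (gen_iff halt hnd hdim).mpr ⟨h2, h3⟩⟩

end Symp

section Count

variable {F V : Type} [Field F] [Fintype F] [AddCommGroup V] [Module F V]
  [FiniteDimensional F V] [Fintype V] {B : LinearMap.BilinForm F V}

lemma pow_sub_factor {q : ℕ} (hq : 1 ≤ q) (a b : ℕ) :
    q ^ (a+b) - q ^ a = q ^ a * (q ^ b - 1) := by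
  have h1 : q ^ a * (q ^ b - 1) + q ^ a * 1 = q ^ a * q ^ b := by
    rw [← mul_add]
    congr 1
    have := Nat.one_le_pow b q hq
    omega
  have h2 : q ^ (a+b) = q ^ a * q ^ b := pow_add q a b
  omega

lemma th_mul_pow_sub {q : ℕ} (hq : 2 ≤ q) (j d : ℕ) :
    th q d * (q ^ (j+1) - q ^ j) = q ^ (j+d) - q ^ j := by
  have e2 : q ^ (j+1) - q ^ j = q ^ j * (q - 1) := by
    have := pow_sub_factor (show 1 ≤ q by omega) j 1
    simpa using this
  have e3 : q ^ (j+d) - q ^ j = q ^ j * (q ^ d - 1) := pow_sub_factor (by omega) j d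
  have e4 : th q d * (q - 1) = q ^ d - 1 := by
    have := th_mul (show 1 ≤ q by omega) d
    omega
  rw [e2, e3, ← e4]
  ring

/-- counting `(j+1)`-dimensional t.i. subspaces between a t.i. `U` and `T ≤ U^⊥`. -/
lemma inter_count (halt : ∀ v : V, B v v = 0) (hq : 2 ≤ Fintype.card F)
    {U T : Submodule F V} (hU : TotallyIsotropic B U)
    (hUT : U ≤ T) (hTo : T ≤ B.orthogonal U) {d : ℕ}
    (hd : finrank F T = finrank F U + d) :
    {U' | TotallyIsotropic B U' ∧ U ≤ U' ∧ U' ≤ T ∧ finrank F U' = finrank F U + 1}.ncard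
      = th (Fintype.card F) d := by
  classical
  set A := {U' | TotallyIsotropic B U' ∧ U ≤ U' ∧ U' ≤ T ∧ finrank F U' = finrank F U + 1}
    with hAdef
  have hsupmem : ∀ v ∈ (T : Set V) \ (U : Set V), U ⊔ Submodule.span F {v} ∈ A := by
    rintro v ⟨hvT, hvU⟩
    refine ⟨ti_sup_span halt hU (hTo hvT), le_sup_left, ?_, finrank_sup_span_singleton hvU⟩
    exact sup_le hUT ((Submodule.span_singleton_le_iff_mem v T).mpr hvT)
  have hsupeq : ∀ U' ∈ A, ∀ v ∈ (U' : Set V) \ (U : Set V), U ⊔ Submodule.span F {v} = U' := by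
    rintro U' ⟨hU'ti, hUU', hU'T, hU'rk⟩ v ⟨hvU', hvU⟩
    have hle : U ⊔ Submodule.span F {v} ≤ U' :=
      sup_le hUU' ((Submodule.span_singleton_le_iff_mem v U').mpr hvU')
    exact Submodule.eq_of_le_of_finrank_le hle
      (by rw [finrank_sup_span_singleton hvU, hU'rk])
  have himg : (fun v => U ⊔ Submodule.span F {v}) '' ((T : Set V) \ (U : Set V)) = A := by
    apply Set.Subset.antisymm
    · rintro p ⟨v, hv, rfl⟩
      exact hsupmem v hv
    · rintro U' hU'
      obtain ⟨hU'ti, hUU', hU'T, hU'rk⟩ := hU'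
      have hnle : ¬ (U' ≤ U) := by
        intro hle
        have := Submodule.finrank_mono hle
        omega
      obtain ⟨v, hvU', hvU⟩ := SetLike.not_le_iff_exists.mp hnle
      exact ⟨v, ⟨hU'T hvU', hvU⟩, hsupeq U' ⟨hU'ti, hUU', hU'T, hU'rk⟩ v ⟨hvU', hvU⟩⟩
  have hfib : ∀ U' ∈ (fun v => U ⊔ Submodule.span F {v}) '' ((T : Set V) \ (U : Set V)),
      {v ∈ (T : Set V) \ (U : Set V) | U ⊔ Submodule.span F {v} = U'}.ncard
        = Fintype.card F ^ (finrank F U + 1) - Fintype.card F ^ finrank F U := by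
    intro U' hU'
    rw [himg] at hU'
    obtain ⟨hU'ti, hUU', hU'T, hU'rk⟩ := hU'
    have hset : {v ∈ (T : Set V) \ (U : Set V) | U ⊔ Submodule.span F {v} = U'}
        = (U' : Set V) \ (U : Set V) := by
      ext v
      constructor
      · rintro ⟨⟨hvT, hvU⟩, heq⟩
        refine ⟨?_, hvU⟩
        rw [← heq]
        exact Submodule.mem_sup_right (Submodule.mem_span_singleton_self v)
      · rintro ⟨hvU', hvU⟩
        exact ⟨⟨hU'T hvU', hvU⟩,
          hsupeq U' ⟨hU'ti, hUU', hU'T, hU'rk⟩ v ⟨hvU', hvU⟩⟩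
    rw [hset]
    have := ncard_diff_submodule hUU'
    rw [hU'rk] at this
    omega
  have hfc := fiber_count (Set.toFinite _) (fun v => U ⊔ Submodule.span F {v})
    (Fintype.card F ^ (finrank F U + 1) - Fintype.card F ^ finrank F U) hfib
  rw [himg] at hfc
  have hTd := ncard_diff_submodule hUT
  rw [hd] at hTd
  have hkey := th_mul_pow_sub hq (finrank F U) d
  have hlt : Fintype.card F ^ finrank F U < Fintype.card F ^ (finrank F U + 1) :=
    Nat.pow_lt_pow_right (by omega) (by omega)
  have hpa : Fintype.card F ^ (finrank F U + d) = Fintype.card F ^ (finrank F U + d) := rfl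
  have : A.ncard * (Fintype.card F ^ (finrank F U + 1) - Fintype.card F ^ finrank F U)
      = th (Fintype.card F) d
        * (Fintype.card F ^ (finrank F U + 1) - Fintype.card F ^ finrank F U) := by omega
  exact Nat.eq_of_mul_eq_mul_right (by omega) this

/-- the number of generators containing a t.i. subspace of corank `j`. -/
lemma gen_count (halt : ∀ v : V, B v v = 0) (hnd : B.Nondegenerate)
    (hq : 2 ≤ Fintype.card F) {k : ℕ} (hdim : finrank F V = 2 * k) :
    ∀ j, ∀ U : Submodule F V, TotallyIsotropic B U → finrank F U + j = k →
      {G | IsSympGenerator B G ∧ U ≤ G}.ncard = gprod (Fintype.card F) j := by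
  intro j
  induction j with
  | zero =>
    intro U hU hjk
    have hset : {G | IsSympGenerator B G ∧ U ≤ G} = {U} := by
      ext G
      simp only [Set.mem_setOf_eq, Set.mem_singleton_iff]
      constructor
      · rintro ⟨hG, hle⟩
        have hGk := ((gen_iff halt hnd hdim).mp hG).2
        exact (Submodule.eq_of_le_of_finrank_le hle (by omega)).symm
      · rintro rfl
        exact ⟨(gen_iff halt hnd hdim).mpr ⟨hU, by omega⟩, le_rfl⟩
    rw [hset, Set.ncard_singleton]
    simp [gprod]
  | succ j ih =>
    intro U hU hjk
    set A := {U' | TotallyIsotropic B U' ∧ U ≤ U' ∧ U' ≤ B.orthogonal U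
      ∧ finrank F U' = finrank F U + 1} with hAdef
    have hAcard : A.ncard = th (Fintype.card F) (2*(j+1)) := by
      apply inter_count halt hq hU (ti_le_orthogonal hU) le_rfl
      rw [finrank_orth halt hnd U, hdim]
      omega
    have hGfin : ({G | IsSympGenerator B G ∧ U ≤ G} : Set (Submodule F V)).Finite :=
      Set.toFinite _
    have hAfin : A.Finite := Set.toFinite _
    have hrow : ∀ U' ∈ A, {G ∈ {G | IsSympGenerator B G ∧ U ≤ G} | U' ≤ G}.ncard
        = gprod (Fintype.card F) j := by
      rintro U' ⟨hU'ti, hUU', hU'o, hU'rk⟩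
      have hset : {G ∈ {G | IsSympGenerator B G ∧ U ≤ G} | U' ≤ G}
          = {G | IsSympGenerator B G ∧ U' ≤ G} := by
        ext G
        constructor
        · rintro ⟨⟨hG, _⟩, hle⟩
          exact ⟨hG, hle⟩
        · rintro ⟨hG, hle⟩
          exact ⟨⟨hG, le_trans hUU' hle⟩, hle⟩
      rw [hset]
      exact ih U' hU'ti (by omega)
    have hcol : ∀ G ∈ {G | IsSympGenerator B G ∧ U ≤ G},
        {U' ∈ A | U' ≤ G}.ncard = th (Fintype.card F) (j+1) := by
      rintro G ⟨hG, hUG⟩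
      have hGti := ((gen_iff halt hnd hdim).mp hG).1
      have hGrk := ((gen_iff halt hnd hdim).mp hG).2
      have hset : {U' ∈ A | U' ≤ G}
          = {U' | TotallyIsotropic B U' ∧ U ≤ U' ∧ U' ≤ G
              ∧ finrank F U' = finrank F U + 1} := by
        ext U'
        constructor
        · rintro ⟨⟨h1, h2, _, h4⟩, h5⟩
          exact ⟨h1, h2, h5, h4⟩
        · rintro ⟨h1, h2, h3, h4⟩
          refine ⟨⟨h1, h2, ?_, h4⟩, h3⟩
          intro v hv u hu
          exact hGti u (hUG hu) v (h3 hv)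
      rw [hset]
      exact inter_count halt hq hU hUG
        (fun v hv u hu => hGti u (hUG hu) v hv) (by omega)
    have hdc := dc_const hAfin hGfin (fun U' G => U' ≤ G) (gprod (Fintype.card F) j)
      (th (Fintype.card F) (j+1)) hrow hcol
    rw [hAcard, th_two_mul hq (j+1)] at hdc
    have hpos : 0 < th (Fintype.card F) (j+1) := th_pos (by omega) (by omega)
    have : {G | IsSympGenerator B G ∧ U ≤ G}.ncard * th (Fintype.card F) (j+1)
        = ((Fintype.card F ^ (j+1) + 1) * gprod (Fintype.card F) j)
          * th (Fintype.card F) (j+1) := by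
      rw [mul_comm (th (Fintype.card F) (j+1))] at hdc
      rw [← hdc]
      ring
    have hcancel := Nat.eq_of_mul_eq_mul_right hpos this
    rw [hcancel, gprod_succ]
    ring

end Count

end MOVAux
section Main

lemma MOVAux.ti_point {F V : Type} [Field F] [AddCommGroup V] [Module F V]
    {B : LinearMap.BilinForm F V} (halt : ∀ v : V, B v v = 0) (v : V) :
    TotallyIsotropic B (Submodule.span F {v}) := by
  intro x hx y hy
  obtain ⟨a, rfl⟩ := Submodule.mem_span_singleton.mp hx
  obtain ⟨b, rfl⟩ := Submodule.mem_span_singleton.mp hy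
  simp only [map_smul, LinearMap.smul_apply, smul_eq_mul]
  rw [halt v]
  ring


theorem mOvoid_symplectic_containing_section
    {q n m : ℕ} (hqpp : IsPrimePow q) (hn : 2 ≤ n)
    {F : Type} [Field F] [Fintype F] (hcard : Fintype.card F = q)
    (B : LinearMap.BilinForm F (Fin (2 * n + 2) → F))
    (halt : ∀ v : Fin (2 * n + 2) → F, B v v = 0)
    (hnd : ∀ v : Fin (2 * n + 2) → F, (∀ w, B v w = 0) → v = 0)
    (O : Set (Submodule F (Fin (2 * n + 2) → F)))
    (hm : 1 ≤ m)
    (hnm : ¬(n = 2 ∧ m = q ^ 2 + 1))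
    (hO : IsSympMOvoid B m O)
    (W : Submodule F (Fin (2 * n + 2) → F))
    (hWdim : Module.finrank F W = 2 * n)
    (hWnd : ∀ v ∈ W, (∀ w ∈ W, B v w = 0) → v = 0)
    (hcont : ProjPoints F (Fin (2 * n + 2) → F) ∩ {p | p ≤ W} ⊆ O) :
    O = ProjPoints F (Fin (2 * n + 2) → F) := by
  classical
  subst hcard
  obtain ⟨a, rfl⟩ : ∃ a, n = a + 2 := ⟨n - 2, by omega⟩
  set Q := Fintype.card F with hQdef
  have hq2 : 2 ≤ Q := Fintype.one_lt_card
  have hND : B.Nondegenerate :=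
    (LinearMap.IsRefl.nondegenerate_iff_separatingLeft (MOVAux.bRefl halt)).mpr hnd
  have hdim : Module.finrank F (Fin (2 * (a + 2) + 2) → F) = 2 * (a + 3) := by
    rw [Module.finrank_fin_fun]; omega
  set PP := ProjPoints F (Fin (2 * (a + 2) + 2) → F) with hPP
  set O' := PP \ O with hO'def
  have hOP : O ⊆ PP := hO.1
  -- every point is t.i. of rank 1
  have hpt_ti : ∀ p ∈ PP, TotallyIsotropic B p ∧ Module.finrank F p = 1 := by
    rintro p ⟨v, hv0, rfl⟩
    exact ⟨MOVAux.ti_point halt v, finrank_span_singleton hv0⟩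
  -- m ≤ θ(a+3) and definition of m'
  have hONC : ∀ G : Submodule F (Fin (2 * (a + 2) + 2) → F), IsSympGenerator B G →
      (O ∩ {p | p ≤ G}).ncard = m := hO.2
  have hGenPts : ∀ G : Submodule F (Fin (2 * (a + 2) + 2) → F), IsSympGenerator B G →
      (PP ∩ {p | p ≤ G}).ncard = MOVAux.th Q (a+3) := by
    intro G hG
    rw [hPP, MOVAux.ncard_pts hq2 G, ((MOVAux.gen_iff halt hND hdim).mp hG).2]
  obtain ⟨G₀, -, hG₀⟩ := MOVAux.exists_gen_above halt hND hdim MOVAux.ti_bot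
  have hmle : m ≤ MOVAux.th Q (a+3) := by
    rw [← hONC G₀ hG₀, ← hGenPts G₀ hG₀]
    exact Set.ncard_le_ncard (fun p hp => ⟨hOP hp.1, hp.2⟩) (Set.toFinite _)
  set m' := MOVAux.th Q (a+3) - m with hm'def
  have hmm' : m + m' = MOVAux.th Q (a+3) := by omega
  -- Step A
  have hStepA : ∀ G : Submodule F (Fin (2 * (a + 2) + 2) → F), IsSympGenerator B G →
      {p ∈ O' | p ≤ G}.ncard = m' := by
    intro G hG
    have hset : {p ∈ O' | p ≤ G}
        = (PP ∩ {p | p ≤ G}) \ (O ∩ {p | p ≤ G}) := by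
      ext p
      constructor
      · rintro ⟨⟨hpPP, hpO⟩, hle⟩
        exact ⟨⟨hpPP, hle⟩, fun h => hpO h.1⟩
      · rintro ⟨⟨hpPP, hle⟩, hno⟩
        exact ⟨⟨hpPP, fun h => hno ⟨h, hle⟩⟩, hle⟩
    have hsub : O ∩ {p | p ≤ G} ⊆ PP ∩ {p | p ≤ G} :=
      fun p hp => ⟨hOP hp.1, hp.2⟩
    have hdiff := Set.ncard_diff_add_ncard_of_subset hsub (Set.toFinite _)
    rw [hONC G hG, hGenPts G hG] at hdiff
    rw [hset]
    omega
  -- Step B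
  have hrowB : ∀ p ∈ O', {G ∈ {G | IsSympGenerator B G} | p ≤ G}.ncard
      = MOVAux.gprod Q (a+2) := by
    intro p hp
    have h1 := (hpt_ti p hp.1).1
    have h2 := (hpt_ti p hp.1).2
    exact MOVAux.gen_count halt hND hq2 hdim (a+2) p h1 (by omega)
  have hGensCard : ({G | IsSympGenerator B G} :
      Set (Submodule F (Fin (2 * (a + 2) + 2) → F))).ncard = MOVAux.gprod Q (a+3) := by
    have := MOVAux.gen_count halt hND hq2 hdim (a+3) ⊥ MOVAux.ti_bot
      (by simp)
    rw [← this]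
    congr 1
    ext G
    simp
  have hStepB : O'.ncard = (Q ^ (a+3) + 1) * m' := by
    have hdc := MOVAux.dc_const (Set.toFinite O') (Set.toFinite {G | IsSympGenerator B G})
      (fun p G => p ≤ G) (MOVAux.gprod Q (a+2)) m' hrowB
      (fun G hG => hStepA G hG)
    rw [hGensCard, MOVAux.gprod_succ Q (a+2), show a + 2 + 1 = a + 3 by omega] at hdc
    have hpos := MOVAux.gprod_pos Q (a+2)
    apply Nat.eq_of_mul_eq_mul_right hpos
    rw [hdc]
    ring
  -- Step C
  have hStepC : ∀ P ∈ PP, P ∈ O →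
      {p ∈ O' | p ≤ B.orthogonal P}.ncard = (Q ^ (a+2) + 1) * m' := by
    rintro P hPpp hPO
    obtain ⟨u, hu0, rfl⟩ := hPpp
    set Pu := Submodule.span F {u} with hPu
    set GensP := {G | IsSympGenerator B G ∧ Pu ≤ G} with hGensP
    have hrowC : ∀ p ∈ O', {G ∈ GensP | p ≤ G}.ncard
        = if p ≤ B.orthogonal Pu then MOVAux.gprod Q (a+1) else 0 := by
      intro p hp
      obtain ⟨hpPP, hpnO⟩ := hp
      obtain ⟨v, hv0, rfl⟩ := hpPP
      split_ifs with hle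
      · have hvP : v ∉ Pu := by
          intro hmem
          have h1 : Submodule.span F {v} ≤ Pu :=
            (Submodule.span_singleton_le_iff_mem v Pu).mpr hmem
          have h2 : Submodule.span F {v} = Pu := Submodule.eq_of_le_of_finrank_le h1
            (by rw [finrank_span_singleton hv0, finrank_span_singleton hu0])
          exact hpnO (h2 ▸ hPO)
        have hLti : TotallyIsotropic B (Pu ⊔ Submodule.span F {v}) :=
          MOVAux.ti_sup_span halt (MOVAux.ti_point halt u)
            (hle (Submodule.mem_span_singleton_self v))
        have hLrk : finrank F ↥(Pu ⊔ Submodule.span F {v}) = 2 := by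
          rw [MOVAux.finrank_sup_span_singleton hvP, hPu, finrank_span_singleton hu0]
        have hset : {G ∈ GensP | Submodule.span F {v} ≤ G}
            = {G | IsSympGenerator B G ∧ Pu ⊔ Submodule.span F {v} ≤ G} := by
          ext G
          constructor
          · rintro ⟨⟨hg, h1⟩, h2⟩
            exact ⟨hg, sup_le h1 h2⟩
          · rintro ⟨hg, h12⟩
            exact ⟨⟨hg, le_trans le_sup_left h12⟩, le_trans le_sup_right h12⟩
        rw [hset]
        exact MOVAux.gen_count halt hND hq2 hdim (a+1) _ hLti (by omega)
      · have hset : {G ∈ GensP | Submodule.span F {v} ≤ G} = ∅ := by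
          rw [Set.eq_empty_iff_forall_notMem]
          rintro G ⟨⟨hg, huG⟩, hvG⟩
          apply hle
          refine (Submodule.span_singleton_le_iff_mem v _).mpr ?_
          intro y hy
          obtain ⟨c, rfl⟩ := Submodule.mem_span_singleton.mp hy
          have h0 : B u v = 0 := hg.1 u (huG (Submodule.mem_span_singleton_self u)) v
            (hvG (Submodule.mem_span_singleton_self v))
          simp only [map_smul, LinearMap.smul_apply, smul_eq_mul, LinearMap.BilinForm.IsOrtho]
          rw [h0]
          ring
        rw [hset, Set.ncard_empty]
    have hcolC : ∀ G ∈ GensP, {p ∈ O' | p ≤ G}.ncard = m' := by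
      rintro G ⟨hg, -⟩
      exact hStepA G hg
    have hdc := MOVAux.dc (Set.toFinite O') (Set.toFinite GensP) (fun p G => p ≤ G)
      (fun p => if p ≤ B.orthogonal Pu then MOVAux.gprod Q (a+1) else 0) (fun _ => m')
      hrowC hcolC
    have hGensPcard : GensP.ncard = MOVAux.gprod Q (a+2) := by
      apply MOVAux.gen_count halt hND hq2 hdim (a+2) Pu (MOVAux.ti_point halt u)
      rw [hPu, finrank_span_singleton hu0]
      omega
    have hRHS : ∑ G ∈ (Set.toFinite GensP).toFinset, m' = MOVAux.gprod Q (a+2) * m' := by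
      rw [Finset.sum_const, ← Set.ncard_eq_toFinset_card _ (Set.toFinite GensP),
        hGensPcard, smul_eq_mul]
    have hLHS : ∑ p ∈ (Set.toFinite O').toFinset,
        (if p ≤ B.orthogonal Pu then MOVAux.gprod Q (a+1) else 0)
        = {p ∈ O' | p ≤ B.orthogonal Pu}.ncard * MOVAux.gprod Q (a+1) := by
      rw [Finset.sum_ite, Finset.sum_const_zero, add_zero, Finset.sum_const, smul_eq_mul,
        MOVAux.sep_ncard (Set.toFinite O') (fun p => p ≤ B.orthogonal Pu)]
    rw [hLHS, hRHS] at hdc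
    have hpos := MOVAux.gprod_pos Q (a+1)
    apply Nat.eq_of_mul_eq_mul_right hpos
    rw [hdc, MOVAux.gprod_succ Q (a+1), show a + 1 + 1 = a + 2 by omega]
    ring
  -- Step D: master equation
  set sW := {p ∈ O' | p ≤ B.orthogonal W}.ncard with hsWdef
  have hStepD : MOVAux.th Q (2*a+4) * ((Q ^ (a+2) + 1) * m')
      = (Q ^ (a+3) + 1) * m' * MOVAux.th Q (2*a+3)
        + sW * Q ^ (2*a+3) := by
    set PtsW := PP ∩ {p | p ≤ W} with hPtsW
    have hrowD : ∀ P ∈ PtsW, {p ∈ O' | p ≤ B.orthogonal P}.ncard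
        = (Q ^ (a+2) + 1) * m' := by
      intro P hP
      exact hStepC P hP.1 (hcont hP)
    have hcolD : ∀ p ∈ O', {P ∈ PtsW | p ≤ B.orthogonal P}.ncard
        = MOVAux.th Q (2*a+3)
          + (if p ≤ B.orthogonal W then Q ^ (2*a+3) else 0) := by
      intro p hp
      obtain ⟨v, hv0, hpv⟩ := hp.1
      have hKv : ∀ x, x ∈ LinearMap.ker (B v) ↔ B v x = 0 := fun x => LinearMap.mem_ker
      have hseteq : {P ∈ PtsW | p ≤ B.orthogonal P}
          = PP ∩ {P | P ≤ W ⊓ LinearMap.ker (B v)} := by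
        ext P
        constructor
        · rintro ⟨⟨hPpp, hPW⟩, hle⟩
          refine ⟨hPpp, ?_⟩
          show P ≤ W ⊓ LinearMap.ker (B v)
          refine le_inf hPW ?_
          intro x hx
          have hxv : B x v = 0 := by
            have hv : v ∈ B.orthogonal P := (hpv ▸ hle) (Submodule.mem_span_singleton_self v)
            exact hv x hx
          exact (hKv x).mpr (MOVAux.bRefl halt x v hxv)
        · rintro ⟨hPpp, hPle⟩
          have hPle' : P ≤ W ⊓ LinearMap.ker (B v) := hPle
          refine ⟨⟨hPpp, ?_⟩, ?_⟩
          · show P ≤ W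
            exact le_trans hPle' inf_le_left
          show p ≤ B.orthogonal P
          rw [hpv, Submodule.span_singleton_le_iff_mem]
          intro y hy
          have hyK : y ∈ LinearMap.ker (B v) := (hPle hy).2
          exact MOVAux.bRefl halt v y ((hKv y).mp hyK)
      rw [hseteq]
      have hnc := MOVAux.ncard_pts hq2 (W ⊓ LinearMap.ker (B v))
      by_cases hWK : W ≤ LinearMap.ker (B v)
      · have hWKv : W ⊓ LinearMap.ker (B v) = W := inf_eq_left.mpr hWK
        have hif : p ≤ B.orthogonal W := by
          rw [hpv, Submodule.span_singleton_le_iff_mem]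
          intro w hw
          exact MOVAux.bRefl halt v w ((hKv w).mp (hWK hw))
        rw [if_pos hif, hnc, hWKv, hWdim, show 2*(a+2) = 2*a+3+1 by omega,
          MOVAux.th_succ]
      · have hif : ¬ (p ≤ B.orthogonal W) := by
          intro hcon
          apply hWK
          intro w hw
          refine (hKv w).mpr (MOVAux.bRefl halt w v ?_)
          exact (hpv ▸ hcon) (Submodule.mem_span_singleton_self v) w hw
        have hBvne : (B v) ≠ 0 := by
          intro h
          exact hv0 (hnd v (fun w => by rw [h]; simp))
        have hrange : finrank F (LinearMap.range (B v)) = 1 := by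
          have hle1 : finrank F (LinearMap.range (B v)) ≤ 1 := by
            have h1 := Submodule.finrank_le (LinearMap.range (B v))
            rwa [Module.finrank_self] at h1
          have h0 : finrank F (LinearMap.range (B v)) ≠ 0 :=
            fun h => hBvne (LinearMap.range_eq_bot.mp (Submodule.finrank_eq_zero.mp h))
          omega
        have hker : finrank F ↥(LinearMap.ker (B v)) = 2*a+5 := by
          have h1 := LinearMap.finrank_range_add_finrank_ker (B v)
          rw [hdim, hrange] at h1
          omega
        have hsup : finrank F ↥(W ⊔ LinearMap.ker (B v)) = 2*a+6 := by
          have hle6 : finrank F ↥(W ⊔ LinearMap.ker (B v)) ≤ 2*a+6 := by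
            have h1 := Submodule.finrank_le (W ⊔ LinearMap.ker (B v))
            rw [hdim] at h1
            omega
          have hlt : LinearMap.ker (B v) < W ⊔ LinearMap.ker (B v) :=
            lt_of_le_of_ne le_sup_right (fun h => hWK (le_sup_left.trans h.ge))
          have h2 := Submodule.finrank_lt_finrank_of_lt hlt
          rw [hker] at h2
          omega
        have hinf : finrank F ↥(W ⊓ LinearMap.ker (B v)) = 2*a+3 := by
          have h1 := Submodule.finrank_sup_add_finrank_inf_eq W (LinearMap.ker (B v))
          rw [hWdim, hker, hsup] at h1
          omega
        rw [if_neg hif, hnc, hinf, add_zero]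
    have hdc := MOVAux.dc (Set.toFinite PtsW) (Set.toFinite O')
      (fun P p => p ≤ B.orthogonal P)
      (fun _ => (Q ^ (a+2) + 1) * m')
      (fun p => MOVAux.th Q (2*a+3) + (if p ≤ B.orthogonal W then Q ^ (2*a+3) else 0))
      hrowD hcolD
    have hPtsWcard : PtsW.ncard = MOVAux.th Q (2*a+4) := by
      rw [hPtsW]
      have h1 := MOVAux.ncard_pts hq2 W
      rw [hWdim] at h1
      exact h1.trans (by congr 1)
    have hLHS : ∑ P ∈ (Set.toFinite PtsW).toFinset, ((Q ^ (a+2) + 1) * m')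
        = MOVAux.th Q (2*a+4) * ((Q ^ (a+2) + 1) * m') := by
      rw [Finset.sum_const, ← Set.ncard_eq_toFinset_card _ (Set.toFinite PtsW),
        hPtsWcard, smul_eq_mul]
    have hRHS : ∑ p ∈ (Set.toFinite O').toFinset,
        (MOVAux.th Q (2*a+3) + (if p ≤ B.orthogonal W then Q ^ (2*a+3) else 0))
        = (Q ^ (a+3) + 1) * m' * MOVAux.th Q (2*a+3) + sW * Q ^ (2*a+3) := by
      rw [Finset.sum_add_distrib, Finset.sum_const, Finset.sum_ite, Finset.sum_const_zero,
        add_zero, Finset.sum_const, smul_eq_mul, smul_eq_mul,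
        ← Set.ncard_eq_toFinset_card _ (Set.toFinite O'), hStepB,
        ← MOVAux.sep_ncard (Set.toFinite O') (fun p => p ≤ B.orthogonal W)]
    rw [hLHS, hRHS] at hdc
    exact hdc
  -- Step E
  have hStepE : sW ≤ 1 + Q := by
    have hsub : {p ∈ O' | p ≤ B.orthogonal W} ⊆ PP ∩ {p | p ≤ B.orthogonal W} := by
      rintro p ⟨⟨hpp, -⟩, hle⟩
      exact ⟨hpp, hle⟩
    have hle := Set.ncard_le_ncard hsub (Set.toFinite _)
    have h1 := MOVAux.ncard_pts hq2 (B.orthogonal W)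
    have h2 : finrank F ↥(B.orthogonal W) = 2 := by
      rw [MOVAux.finrank_orth halt hND W, hdim, hWdim]
      omega
    rw [h2] at h1
    have h3 : MOVAux.th Q 2 = 1 + Q := by
      simp [MOVAux.th, Finset.sum_range_succ]
    rw [h1, h3] at hle
    exact hle
  -- Step F: arithmetic
  have hm'0 : m' = 0 := by
    by_contra hm'ne
    -- cast everything to ℤ
    have hq1 : 1 ≤ Q := by omega
    have tcast : ∀ d : ℕ, (MOVAux.th Q d : ℤ) * ((Q : ℤ) - 1) = (Q : ℤ) ^ d - 1 := by
      intro d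
      have h := MOVAux.th_mul hq1 d
      have h1 : ((MOVAux.th Q d * (Q - 1) + 1 : ℕ) : ℤ) = ((Q ^ d : ℕ) : ℤ) := by
        exact_mod_cast congrArg (fun x : ℕ => (x : ℤ)) h
      push_cast [Nat.cast_sub hq1] at h1
      linarith
    have hM : (MOVAux.th Q (2*a+4) : ℤ) * (((Q:ℤ) ^ (a+2) + 1) * (m' : ℤ))
        = ((Q:ℤ) ^ (a+3) + 1) * (m' : ℤ) * (MOVAux.th Q (2*a+3) : ℤ)
          + (sW : ℤ) * (Q:ℤ) ^ (2*a+3) := by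
      exact_mod_cast hStepD
    have e1 := tcast (2*a+4)
    have e2 := tcast (2*a+3)
    have hseq : ((sW : ℤ) * (Q:ℤ) ^ (2*a+3)) * ((Q:ℤ) - 1)
        = ((m' : ℤ) * ((Q:ℤ) ^ (a+2) * ((Q:ℤ) ^ (a+1) + 1))) * ((Q:ℤ) - 1) := by
      linear_combination (((Q:ℤ) ^ (a+2) + 1) * (m' : ℤ)) * e1
        - (((Q:ℤ) ^ (a+3) + 1) * (m' : ℤ)) * e2 - ((Q:ℤ) - 1) * hM
    have hx1 : ((Q:ℤ) - 1) ≠ 0 := by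
      have : (2 : ℤ) ≤ (Q : ℤ) := by exact_mod_cast hq2
      omega
    have hseq2 := mul_right_cancel₀ hx1 hseq
    have hxn : ((Q:ℤ) ^ (a+2)) ≠ 0 := by positivity
    have hseq3 : ((sW : ℤ) * (Q:ℤ) ^ (a+1)) * (Q:ℤ) ^ (a+2)
        = ((m' : ℤ) * ((Q:ℤ) ^ (a+1) + 1)) * (Q:ℤ) ^ (a+2) := by
      linear_combination hseq2
    have hseq4 := mul_right_cancel₀ hxn hseq3
    have hNat : sW * Q ^ (a+1) = m' * (Q ^ (a+1) + 1) := by exact_mod_cast hseq4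
    -- now pure ℕ reasoning
    have hco : Nat.Coprime (Q ^ (a+1)) (Q ^ (a+1) + 1) := by simp
    have hdvd : Q ^ (a+1) ∣ m' * (Q ^ (a+1) + 1) := ⟨sW, by rw [← hNat]; ring⟩
    have hdm : Q ^ (a+1) ∣ m' := hco.dvd_of_dvd_mul_right hdvd
    obtain ⟨t, ht⟩ := hdm
    have ht1 : 1 ≤ t := by
      rcases Nat.eq_zero_or_pos t with rfl | h
      · simp at ht; omega
      · omega
    have hYpos : 0 < Q ^ (a+1) := Nat.pow_pos (by omega)
    have hs_eq : sW = t * (Q ^ (a+1) + 1) := by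
      have h1 : sW * Q ^ (a+1) = (t * (Q ^ (a+1) + 1)) * Q ^ (a+1) := by
        rw [hNat, ht]; ring
      exact Nat.eq_of_mul_eq_mul_right hYpos h1
    have hYQ : Q ^ (a+1) ≤ Q := by
      have h1 : Q ^ (a+1) + 1 ≤ t * (Q ^ (a+1) + 1) := Nat.le_mul_of_pos_left _ ht1
      omega
    have ha0 : a = 0 := by
      by_contra ha
      have h2a : 2 ≤ a + 1 := by omega
      have h1 : Q ^ 2 ≤ Q ^ (a+1) := Nat.pow_le_pow_right (by omega) h2a
      have h2 : Q * Q = Q ^ 2 := (sq Q).symm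
      have h3 : 2 * Q ≤ Q * Q := Nat.mul_le_mul_right Q hq2
      omega
    -- so n = 2, m' = Q * t, and t = 1
    have hQa : Q ^ (a+1) = Q := by rw [ha0, pow_one]
    have ht2 : t = 1 := by
      have h1 : t * (Q + 1) ≤ 1 + Q := by
        rw [← hQa]
        rw [hs_eq] at hStepE
        omega
      by_contra htne
      have h2 : 2 * (Q + 1) ≤ t * (Q + 1) := Nat.mul_le_mul_right _ (by omega)
      omega
    have hm'Q : m' = Q := by
      rw [ht, ht2, hQa]; ring
    have hth3 : MOVAux.th Q (a+3) = 1 + Q + Q ^ 2 := by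
      rw [show a + 3 = 3 by omega]
      simp [MOVAux.th, Finset.sum_range_succ]
    have hmQ : m = Q ^ 2 + 1 := by
      rw [hm'Q, hth3] at hmm'
      omega
    exact hnm ⟨by omega, hmQ⟩
  -- Step G: conclusion
  apply Set.Subset.antisymm hOP
  intro p hp
  by_contra hpO
  have hpO' : p ∈ O' := ⟨hp, hpO⟩
  obtain ⟨G, hpG, hG⟩ := MOVAux.exists_gen_above halt hND hdim (hpt_ti p hp).1
  have h0 := hStepA G hG
  rw [hm'0, Set.ncard_eq_zero (Set.toFinite _)] at h0
  exact absurd h0 (Set.nonempty_iff_ne_empty.mp ⟨p, hpO', hpG⟩)
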